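/- Let κ ∈ (0,1), ζ ∈ (0,1), and let (α_k)_{k∈ℕ} be positive reals with α_k = Θ((k+1)^{−1}). Define b_k := Σ_{i=0}^{k} κ^{k−i} α_i, b_{−1} := 0, and T(k) := the least i ≤ k such that κ^{k−j} b_j ≥ b_k^{1+ζ} for all j ∈ [i, k]. Let L > 0 and let (x_k)_{k∈ℕ} ⊂ ℝⁿ and (v_k)_{k∈ℕ} ⊂ ℝⁿ satisfy |v_k| ≤ L for all k and x_{k+1} − x_k = −Σ_{i=0}^{k} κ^{k−i} α_i v_i for all k ≥ 0. Then: (1) k − T(k) = O(log(k+2)); and (2) for every ξ ∈ (0,1) there exists C_ξ > 0 such that for all sufficiently large k and all i ∈ [T(k), k], one has |x_i − x_k| ≤ C_ξ b_k^{ξ}. -/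

import Mathlib

open Filter
set_option maxHeartbeats 4000000

private lemma log_lin_aux (a : ℝ) (ha : 0 < a) :
    ∃ K : ℕ, ∀ k : ℕ, K ≤ k → Real.log ((k : ℝ) + 2) ≤ a * k := by
  have h := Real.isLittleO_log_id_atTop.def (half_pos ha)
  rw [Filter.eventually_atTop] at h
  obtain ⟨X, hX⟩ := h
  refine ⟨max 2 ⌈X⌉₊, fun k hk => ?_⟩
  have hk2 : (2 : ℕ) ≤ k := le_trans (le_max_left _ _) hk
  have hk2' : (2 : ℝ) ≤ (k : ℝ) := by exact_mod_cast hk2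
  have hkX : X ≤ (k : ℝ) + 2 := by
    have h1 : (⌈X⌉₊ : ℝ) ≤ (k : ℝ) := by exact_mod_cast le_trans (le_max_right _ _) hk
    have h2 := Nat.le_ceil X
    linarith
  have h2 := hX ((k : ℝ) + 2) hkX
  simp only [id] at h2
  have hlog : Real.log ((k : ℝ) + 2) ≤ a / 2 * ((k : ℝ) + 2) := by
    calc Real.log ((k : ℝ) + 2) ≤ ‖Real.log ((k : ℝ) + 2)‖ := le_abs_self _
      _ ≤ a / 2 * ‖(k : ℝ) + 2‖ := h2
      _ = a / 2 * ((k : ℝ) + 2) := by rw [Real.norm_of_nonneg (by positivity)]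
  nlinarith

/-- For the momentum method, the recent-window length satisfies
`k - T(k) = O(log(k+2))`, and within the recent window the iterates stay within
`C_ξ b_k^ξ` of `x_k`, for every `ξ ∈ (0,1)`. -/
theorem momentum_recent_window_iterates {n : ℕ} (κ ζ : ℝ)
    (hκ : κ ∈ Set.Ioo (0 : ℝ) 1) (hζ : ζ ∈ Set.Ioo (0 : ℝ) 1)
    (α : ℕ → ℝ) (hαpos : ∀ k, 0 < α k)
    (hΘ : ∃ c₁ c₂ : ℝ, ∃ N : ℕ, 0 < c₁ ∧ c₁ ≤ c₂ ∧ ∀ k ≥ N,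
      c₁ / ((k : ℝ) + 1) ≤ α k ∧ α k ≤ c₂ / ((k : ℝ) + 1))
    (b : ℕ → ℝ) (hb : ∀ k, b k = ∑ i ∈ Finset.range (k + 1), κ ^ (k - i) * α i)
    (T : ℕ → ℕ)
    (hT : ∀ k, T k = sInf {i : ℕ | i ≤ k ∧ ∀ j, i ≤ j → j ≤ k →
      b k ^ (1 + ζ) ≤ κ ^ (k - j) * b j})
    (L : ℝ) (hL : 0 < L)
    (x v : ℕ → EuclideanSpace ℝ (Fin n))
    (hv : ∀ k, ‖v k‖ ≤ L)
    (hx : ∀ k, x (k + 1) - x k = -∑ i ∈ Finset.range (k + 1), (κ ^ (k - i) * α i) • v i) :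
    (∃ C > (0 : ℝ), ∃ K : ℕ, ∀ k ≥ K,
      ((k : ℝ) - (T k : ℝ)) ≤ C * Real.log ((k : ℝ) + 2)) ∧
    (∀ ξ ∈ Set.Ioo (0 : ℝ) 1, ∃ Cξ > (0 : ℝ), ∃ K : ℕ, ∀ k ≥ K, ∀ i, T k ≤ i → i ≤ k →
      ‖x i - x k‖ ≤ Cξ * b k ^ ξ) := by
  obtain ⟨hκ0, hκ1⟩ := hκ
  obtain ⟨hζ0, hζ1⟩ := hζ
  obtain ⟨c₁, c₂, N, hc₁, hc₁₂, hΘ'⟩ := hΘ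
  -- positivity of b
  have hbpos : ∀ k, 0 < b k := by
    intro k
    rw [hb]
    apply Finset.sum_pos
    · intro i _
      exact mul_pos (pow_pos hκ0 _) (hαpos i)
    · exact ⟨0, Finset.mem_range.2 (Nat.succ_pos k)⟩
  -- recursion
  have hrec : ∀ k, b (k + 1) = κ * b k + α (k + 1) := by
    intro k
    rw [hb (k + 1), Finset.sum_range_succ, hb k, Finset.mul_sum]
    rw [Finset.sum_congr rfl (fun i hi => ?_)]
    · simp [Nat.sub_self]; ring
    · rw [Finset.mem_range] at hi
      have h1 : k + 1 - i = (k - i) + 1 := by omega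
      rw [h1, pow_succ]
      ring
  -- bound α i ≤ M/(i+1)
  have hc₂0 : 0 < c₂ := lt_of_lt_of_le hc₁ hc₁₂
  set M : ℝ := c₂ + ∑ i ∈ Finset.range N, ((i : ℝ) + 1) * α i with hM_def
  have hsum_nonneg : 0 ≤ ∑ i ∈ Finset.range N, ((i : ℝ) + 1) * α i :=
    Finset.sum_nonneg fun i _ => mul_nonneg (by positivity) (hαpos i).le
  have hMpos : 0 < M := by positivity
  have hαM : ∀ i : ℕ, α i ≤ M / ((i : ℝ) + 1) := by
    intro i
    rw [le_div_iff₀ (by positivity)]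
    rcases lt_or_ge i N with h | h
    · have h1 : ((i : ℝ) + 1) * α i ≤ ∑ j ∈ Finset.range N, ((j : ℝ) + 1) * α j :=
        Finset.single_le_sum (f := fun j : ℕ => ((j : ℝ) + 1) * α j)
          (fun j _ => mul_nonneg (by positivity) (hαpos j).le) (Finset.mem_range.2 h)
      have : α i * ((i : ℝ) + 1) = ((i : ℝ) + 1) * α i := by ring
      rw [this]
      linarith
    · have h2 := (hΘ' i h).2
      have h3 : α i * ((i : ℝ) + 1) ≤ c₂ := by
        rw [le_div_iff₀ (by positivity)] at h2
        linarith
      linarith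
  -- step constant
  set K₁ : ℕ := ⌈2 / (1 - κ)⌉₊ with hK₁_def
  have hK₁ : 2 / (1 - κ) ≤ (K₁ : ℝ) := Nat.le_ceil _
  set C₀ : ℝ := max (((K₁ : ℝ) + 1) * b K₁) (2 * M / (1 - κ)) with hC₀_def
  have hκ1' : 0 < 1 - κ := by linarith
  have hC₀pos : 0 < C₀ := lt_of_lt_of_le (by positivity) (le_max_right _ _)
  have hind : ∀ k, K₁ ≤ k → ((k : ℝ) + 1) * b k ≤ C₀ := by
    intro k hk
    induction k, hk using Nat.le_induction with
    | base => exact le_max_left _ _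
    | succ k hk ih =>
      have hkR : 2 / (1 - κ) ≤ (k : ℝ) := le_trans hK₁ (by exact_mod_cast hk)
      have hk1 : 2 ≤ (1 - κ) * (k : ℝ) := by
        rw [div_le_iff₀ (by linarith)] at hkR
        linarith
      have hM2 : 2 * M / (1 - κ) ≤ C₀ := le_max_right _ _
      have hMC : 2 * M ≤ (1 - κ) * C₀ := by
        rw [div_le_iff₀ (by linarith)] at hM2
        linarith
      have hα' : ((k : ℝ) + 1 + 1) * α (k + 1) ≤ M := by
        have := hαM (k + 1)
        rw [le_div_iff₀ (by push_cast; positivity)] at this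
        push_cast at this ⊢
        linarith
      have hstep : κ * ((k : ℝ) + 2) ≤ (1 + κ) * ((k : ℝ) + 1) / 2 := by nlinarith
      have hbk := (hbpos k).le
      have h1 : ((k : ℝ) + 1 + 1) * b (k + 1) ≤ (1 + κ) / 2 * C₀ + M := by
        rw [hrec k]
        have h2 : κ * ((k : ℝ) + 2) * b k ≤ (1 + κ) / 2 * (((k : ℝ) + 1) * b k) := by
          nlinarith
        have h3 : (1 + κ) / 2 * (((k : ℝ) + 1) * b k) ≤ (1 + κ) / 2 * C₀ :=
          mul_le_mul_of_nonneg_left ih (by linarith)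
        push_cast
        nlinarith
      push_cast at h1 ⊢
      nlinarith
  set C₂' : ℝ := C₀ + ∑ k ∈ Finset.range K₁, ((k : ℝ) + 1) * b k with hC₂'_def
  have hsum2 : 0 ≤ ∑ k ∈ Finset.range K₁, ((k : ℝ) + 1) * b k :=
    Finset.sum_nonneg fun k _ => mul_nonneg (by positivity) (hbpos k).le
  have hC₂pos : 0 < C₂' := by positivity
  have hC₂ : ∀ k : ℕ, ((k : ℝ) + 1) * b k ≤ C₂' := by
    intro k
    rcases le_or_gt K₁ k with h | h
    · exact le_trans (hind k h) (by linarith)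
    · have h1 : ((k : ℝ) + 1) * b k ≤ ∑ j ∈ Finset.range K₁, ((j : ℝ) + 1) * b j :=
        Finset.single_le_sum (f := fun j : ℕ => ((j : ℝ) + 1) * b j)
          (fun j _ => mul_nonneg (by positivity) (hbpos j).le) (Finset.mem_range.2 h)
      linarith
  -- simple consequences
  have hbub : ∀ k : ℕ, b k ≤ C₂' := by
    intro k
    have h := hC₂ k
    have h2 : b k ≤ ((k : ℝ) + 1) * b k :=
      le_mul_of_one_le_left (hbpos k).le (by linarith [Nat.cast_nonneg (α := ℝ) k])
    linarith
  -- lower bound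
  set c : ℝ := min c₁ 1 with hc_def
  have hcpos : 0 < c := lt_min hc₁ one_pos
  have hc1 : c ≤ 1 := min_le_right _ _
  have hlow : ∀ k : ℕ, N ≤ k → c / ((k : ℝ) + 1) ≤ b k := by
    intro k hk
    have h1 : α k ≤ b k := by
      rw [hb]
      have := Finset.single_le_sum (f := fun i : ℕ => κ ^ (k - i) * α i)
        (fun i _ => mul_nonneg (pow_nonneg hκ0.le _) (hαpos i).le)
        (Finset.mem_range.2 (Nat.lt_succ_self k))
      simpa [Nat.sub_self] using this
    have h2 := (hΘ' k hk).1
    have h3 : c / ((k : ℝ) + 1) ≤ c₁ / ((k : ℝ) + 1) := by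
      gcongr
      exact min_le_left _ _
    linarith
  -- Part 1 core
  clear_value M K₁ C₀ C₂'
  obtain ⟨r, hr_def⟩ : ∃ y : ℝ, y = -Real.log κ := ⟨_, rfl⟩
  have hrpos : 0 < r := by
    have := Real.log_neg hκ0 hκ1
    rw [hr_def]; linarith
  obtain ⟨K₃, hK₃⟩ := log_lin_aux (r / 6) (by positivity)
  obtain ⟨Kc, hKc_le⟩ : ∃ j : ℕ, C₂' / (c * c) ≤ (j : ℝ) := ⟨⌈C₂' / (c * c)⌉₊, Nat.le_ceil _⟩
  obtain ⟨K₀, hK₀a, hK₀b, hK₀c, hK₀d⟩ : ∃ j : ℕ, K₃ ≤ j ∧ 2 ≤ j ∧ N ≤ j ∧ Kc ≤ j :=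
    ⟨max (max K₃ 2) (max N Kc), by omega, by omega, by omega, by omega⟩
  obtain ⟨C, hC_def⟩ : ∃ y : ℝ, y = 3 / r + 1 := ⟨_, rfl⟩
  have hC3r : 3 / r ≤ C := by rw [hC_def]; linarith
  have hCpos : 0 < C := by rw [hC_def]; positivity
  have part1 : ∀ k : ℕ, K₀ ≤ k → ((k : ℝ) - (T k : ℝ)) ≤ C * Real.log ((k : ℝ) + 2) := by
    intro k hk
    have hk2' : (2 : ℝ) ≤ (k : ℝ) := by exact_mod_cast le_trans hK₀b hk
    have hkN : N ≤ k := le_trans hK₀c hk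
    have hkKc' : C₂' / (c * c) ≤ (k : ℝ) :=
      le_trans hKc_le (by exact_mod_cast le_trans hK₀d hk)
    have hkKc'' : C₂' ≤ c * c * (k : ℝ) := by
      rw [div_le_iff₀ (mul_pos hcpos hcpos)] at hkKc'
      linarith
    have hkc : C₂' < c * c * ((k : ℝ) + 2) := by
      nlinarith [mul_pos hcpos hcpos]
    have hcc1 : c * c ≤ 1 := by nlinarith
    have hC₂k : C₂' ≤ (k : ℝ) := by nlinarith [Nat.cast_nonneg (α := ℝ) k]
    have hbk1 : b k ≤ 1 := by
      have h1 := hC₂ k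
      nlinarith [hbpos k]
    have hlogpos : 0 ≤ Real.log ((k : ℝ) + 2) := Real.log_nonneg (by linarith)
    obtain ⟨m, hm_low, hm_high⟩ :
        ∃ m : ℕ, 3 / r * Real.log ((k : ℝ) + 2) ≤ (m : ℝ) ∧
          (m : ℝ) < 3 / r * Real.log ((k : ℝ) + 2) + 1 :=
      ⟨⌈3 / r * Real.log ((k : ℝ) + 2)⌉₊, Nat.le_ceil _,
        Nat.ceil_lt_add_one (by positivity)⟩
    have hmk : m ≤ k := by
      have h1 := hK₃ k (le_trans hK₀a hk)
      have h2 : 3 / r * Real.log ((k : ℝ) + 2) ≤ (k : ℝ) / 2 := by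
        calc 3 / r * Real.log ((k : ℝ) + 2) ≤ 3 / r * (r / 6 * k) :=
              mul_le_mul_of_nonneg_left h1 (by positivity)
          _ = (k : ℝ) / 2 := by field_simp; ring
      have h4 : (m : ℝ) ≤ (k : ℝ) := by linarith
      exact_mod_cast h4
    -- κ^m is very small
    have hκm : κ ^ m ≤ 1 / ((k : ℝ) + 2) ^ 3 := by
      have e1 : κ ^ m = Real.exp ((m : ℝ) * Real.log κ) := by
        rw [← Real.log_pow, Real.exp_log (pow_pos hκ0 m)]
      have e2 : (m : ℝ) * Real.log κ ≤ -(3 * Real.log ((k : ℝ) + 2)) := by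
        have : Real.log κ = -r := by rw [hr_def]; ring
        rw [this]
        have : 3 * Real.log ((k : ℝ) + 2) ≤ (m : ℝ) * r := by
          rw [← mul_le_mul_iff_of_pos_right hrpos] at hm_low
          calc 3 * Real.log ((k : ℝ) + 2) = 3 / r * Real.log ((k : ℝ) + 2) * r := by
                field_simp
            _ ≤ (m : ℝ) * r := hm_low
        linarith
      have e3 : Real.exp (-(3 * Real.log ((k : ℝ) + 2))) = 1 / ((k : ℝ) + 2) ^ 3 := by
        rw [Real.exp_neg]
        have : (3 : ℝ) * Real.log ((k : ℝ) + 2) = Real.log (((k : ℝ) + 2) ^ (3 : ℕ)) := by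
          rw [Real.log_pow]; norm_num
        rw [this, Real.exp_log (by positivity)]
        rw [one_div]
      rw [e1, ← e3]
      exact Real.exp_le_exp.2 e2
    -- the condition fails at k - m
    have hfail : κ ^ (k - (k - m)) * b (k - m) < b k ^ (1 + ζ) := by
      rw [Nat.sub_sub_self hmk]
      have h1 : κ ^ m * b (k - m) ≤ C₂' / ((k : ℝ) + 2) ^ 3 := by
        have := hbub (k - m)
        calc κ ^ m * b (k - m) ≤ (1 / ((k : ℝ) + 2) ^ 3) * C₂' := by
              apply mul_le_mul hκm this (hbpos _).le (by positivity)
          _ = C₂' / ((k : ℝ) + 2) ^ 3 := by ring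
      have hck1 : 0 < c / ((k : ℝ) + 1) := by positivity
      have hck2 : c / ((k : ℝ) + 1) ≤ 1 := by
        rw [div_le_one (by positivity)]
        linarith
      have h2 : (c / ((k : ℝ) + 1)) ^ ((2 : ℕ) : ℝ) ≤ b k ^ (1 + ζ) := by
        calc (c / ((k : ℝ) + 1)) ^ ((2 : ℕ) : ℝ)
            ≤ (c / ((k : ℝ) + 1)) ^ (1 + ζ) := by
              apply Real.rpow_le_rpow_of_exponent_ge hck1 hck2
              push_cast; linarith
          _ ≤ b k ^ (1 + ζ) :=
              Real.rpow_le_rpow hck1.le (hlow k hkN) (by linarith)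
      rw [Real.rpow_natCast, div_pow] at h2
      have h3 : C₂' / ((k : ℝ) + 2) ^ 3 < c ^ 2 / ((k : ℝ) + 1) ^ 2 := by
        rw [div_lt_div_iff₀ (by positivity) (by positivity)]
        have hkk : ((k : ℝ) + 1) ^ 2 ≤ ((k : ℝ) + 2) ^ 2 := by nlinarith
        calc C₂' * ((k : ℝ) + 1) ^ 2 < (c * c * ((k : ℝ) + 2)) * ((k : ℝ) + 1) ^ 2 := by
              apply mul_lt_mul_of_pos_right hkc (by positivity)
          _ ≤ (c * c * ((k : ℝ) + 2)) * ((k : ℝ) + 2) ^ 2 := by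
              apply mul_le_mul_of_nonneg_left hkk (by positivity)
          _ = c ^ 2 * ((k : ℝ) + 2) ^ 3 := by ring
      linarith
    -- hence T k > k - m
    have hSne : k ∈ {i : ℕ | i ≤ k ∧ ∀ j, i ≤ j → j ≤ k →
        b k ^ (1 + ζ) ≤ κ ^ (k - j) * b j} := by
      refine ⟨le_refl k, fun j hjk hkj => ?_⟩
      have hjj : j = k := le_antisymm hkj hjk
      subst hjj
      simp only [Nat.sub_self, pow_zero, one_mul]
      calc b j ^ (1 + ζ) ≤ b j ^ (1 : ℝ) :=
            Real.rpow_le_rpow_of_exponent_ge (hbpos j) hbk1 (by linarith)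
        _ = b j := Real.rpow_one _
    have hTmem : T k ∈ {i : ℕ | i ≤ k ∧ ∀ j, i ≤ j → j ≤ k →
        b k ^ (1 + ζ) ≤ κ ^ (k - j) * b j} := by
      rw [hT k]
      exact Nat.sInf_mem ⟨k, hSne⟩
    have hTgt : k - m < T k := by
      by_contra hcon
      push_neg at hcon
      have := hTmem.2 (k - m) hcon (Nat.sub_le k m)
      linarith
    -- conclude
    have hcast : ((k - m : ℕ) : ℝ) = (k : ℝ) - (m : ℝ) := by
      rw [Nat.cast_sub hmk]
    have hT' : (k : ℝ) - (m : ℝ) + 1 ≤ (T k : ℝ) := by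
      have : (k - m : ℕ) + 1 ≤ T k := hTgt
      have h5 : ((k - m : ℕ) : ℝ) + 1 ≤ (T k : ℝ) := by exact_mod_cast this
      linarith [hcast ▸ h5]
    have : (k : ℝ) - (T k : ℝ) ≤ 3 / r * Real.log ((k : ℝ) + 2) := by linarith
    calc (k : ℝ) - (T k : ℝ) ≤ 3 / r * Real.log ((k : ℝ) + 2) := this
      _ ≤ C * Real.log ((k : ℝ) + 2) := mul_le_mul_of_nonneg_right hC3r hlogpos
  -- step bound and telescoping
  have hΔ : ∀ l : ℕ, ‖x (l + 1) - x l‖ ≤ L * b l := by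
    intro l
    rw [hx l, norm_neg]
    calc ‖∑ i ∈ Finset.range (l + 1), (κ ^ (l - i) * α i) • v i‖
        ≤ ∑ i ∈ Finset.range (l + 1), ‖(κ ^ (l - i) * α i) • v i‖ := norm_sum_le _ _
      _ ≤ ∑ i ∈ Finset.range (l + 1), κ ^ (l - i) * α i * L := by
          apply Finset.sum_le_sum
          intro i _
          rw [norm_smul, Real.norm_of_nonneg (mul_nonneg (pow_nonneg hκ0.le _) (hαpos i).le)]
          exact mul_le_mul_of_nonneg_left (hv i) (mul_nonneg (pow_nonneg hκ0.le _) (hαpos i).le)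
      _ = L * b l := by
          rw [hb l, Finset.mul_sum]
          exact Finset.sum_congr rfl fun i _ => by ring
  have htel : ∀ i k : ℕ, i ≤ k → x k - x i = ∑ l ∈ Finset.Ico i k, (x (l + 1) - x l) := by
    intro i k hik
    rw [Finset.sum_Ico_eq_sub _ hik, Finset.sum_range_sub, Finset.sum_range_sub]
    abel
  refine ⟨⟨C, hCpos, K₀, part1⟩, ?_⟩
  intro ξ hξ
  obtain ⟨hξ0, hξ1⟩ := hξ
  have h1ξ : 0 < 1 - ξ := by linarith
  have hcξ : 0 < c ^ ξ := Real.rpow_pos_of_pos hcpos ξ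
  obtain ⟨K₆, hK₆⟩ := log_lin_aux (1 / (4 * C)) (by positivity)
  obtain ⟨Cξ, hCξ_def⟩ : ∃ y : ℝ, y = 4 * L * C * C₂' / ((1 - ξ) * c ^ ξ) := ⟨_, rfl⟩
  have hCξpos : 0 < Cξ := by rw [hCξ_def]; positivity
  obtain ⟨K₇, hK₇a, hK₇b, hK₇c⟩ : ∃ j : ℕ, K₀ ≤ j ∧ K₆ ≤ j ∧ 2 ≤ j :=
    ⟨max K₀ (max K₆ 2), by omega, by omega, by omega⟩
  refine ⟨Cξ, hCξpos, K₇, fun k hk i hTi hik => ?_⟩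
  have hkN : N ≤ k := le_trans hK₀c (le_trans hK₇a hk)
  have hk2' : (2 : ℝ) ≤ (k : ℝ) := by exact_mod_cast le_trans hK₇c hk
  have hp1 := part1 k (le_trans hK₇a hk)
  have hlog6 := hK₆ k (le_trans hK₇b hk)
  have hp2 : C * Real.log ((k : ℝ) + 2) ≤ (k : ℝ) / 4 := by
    have := mul_le_mul_of_nonneg_left hlog6 hCpos.le
    calc C * Real.log ((k : ℝ) + 2) ≤ C * (1 / (4 * C) * k) := this
      _ = (k : ℝ) / 4 := by field_simp
  have hThalf : (k : ℝ) / 2 ≤ (T k : ℝ) := by linarith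
  -- each b l in the window is at most 2 C₂'/(k+1)
  have hwin : ∀ l : ℕ, T k ≤ l → b l ≤ 2 * C₂' / ((k : ℝ) + 1) := by
    intro l hl
    have hl' : (T k : ℝ) ≤ (l : ℝ) := by exact_mod_cast hl
    have h1 := hC₂ l
    have h2 : ((k : ℝ) + 1) / 2 ≤ (l : ℝ) + 1 := by linarith
    rw [le_div_iff₀ (by positivity)]
    nlinarith [hbpos l]
  -- sum bound
  have hnorm : ‖x i - x k‖ ≤ ((k : ℝ) - (i : ℝ)) * (L * (2 * C₂' / ((k : ℝ) + 1))) := by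
    rw [← norm_neg, neg_sub, htel i k hik]
    have hbound : ∀ l ∈ Finset.Ico i k, ‖x (l + 1) - x l‖ ≤ L * (2 * C₂' / ((k : ℝ) + 1)) := by
      intro l hl
      rw [Finset.mem_Ico] at hl
      have := hwin l (le_trans hTi hl.1)
      exact le_trans (hΔ l) (mul_le_mul_of_nonneg_left this hL.le)
    calc ‖∑ l ∈ Finset.Ico i k, (x (l + 1) - x l)‖
        ≤ ∑ l ∈ Finset.Ico i k, ‖x (l + 1) - x l‖ := norm_sum_le _ _
      _ ≤ (Finset.Ico i k).card • (L * (2 * C₂' / ((k : ℝ) + 1))) :=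
          Finset.sum_le_card_nsmul _ _ _ hbound
      _ = ((k - i : ℕ) : ℝ) * (L * (2 * C₂' / ((k : ℝ) + 1))) := by
          rw [Nat.card_Ico, nsmul_eq_mul]
      _ = ((k : ℝ) - (i : ℝ)) * (L * (2 * C₂' / ((k : ℝ) + 1))) := by
          rw [Nat.cast_sub hik]
  have hki : (k : ℝ) - (i : ℝ) ≤ C * Real.log ((k : ℝ) + 2) := by
    have : (T k : ℝ) ≤ (i : ℝ) := by exact_mod_cast hTi
    linarith
  have hnorm2 : ‖x i - x k‖ ≤ C * Real.log ((k : ℝ) + 2) * (L * (2 * C₂' / ((k : ℝ) + 1))) := by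
    refine le_trans hnorm (mul_le_mul_of_nonneg_right hki (by positivity))
  -- rpow estimates
  have hkpos : (0 : ℝ) < (k : ℝ) + 1 := by linarith
  have hP : 0 < ((k : ℝ) + 1) ^ ξ := Real.rpow_pos_of_pos hkpos ξ
  have hbξ : c ^ ξ / ((k : ℝ) + 1) ^ ξ ≤ b k ^ ξ := by
    rw [← Real.div_rpow hcpos.le hkpos.le]
    exact Real.rpow_le_rpow (by positivity) (hlow k hkN) hξ0.le
  have hlog_pow : (1 - ξ) * Real.log ((k : ℝ) + 2) * (((k : ℝ) + 1) ^ ξ) ≤ 2 * ((k : ℝ) + 1) := by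
    have e1 : (1 - ξ) * Real.log ((k : ℝ) + 2) = Real.log (((k : ℝ) + 2) ^ (1 - ξ)) :=
      (Real.log_rpow (by linarith) _).symm
    have e2 : Real.log (((k : ℝ) + 2) ^ (1 - ξ)) ≤ ((k : ℝ) + 2) ^ (1 - ξ) := by
      have := Real.log_le_sub_one_of_pos (Real.rpow_pos_of_pos (by linarith : (0:ℝ) < (k : ℝ) + 2) (1 - ξ))
      linarith
    have e3 : ((k : ℝ) + 2) ^ (1 - ξ) ≤ 2 * ((k : ℝ) + 1) ^ (1 - ξ) := by
      calc ((k : ℝ) + 2) ^ (1 - ξ) ≤ (2 * ((k : ℝ) + 1)) ^ (1 - ξ) :=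
            Real.rpow_le_rpow (by linarith) (by linarith) h1ξ.le
        _ = 2 ^ (1 - ξ) * ((k : ℝ) + 1) ^ (1 - ξ) := Real.mul_rpow (by norm_num) hkpos.le
        _ ≤ 2 * ((k : ℝ) + 1) ^ (1 - ξ) := by
            apply mul_le_mul_of_nonneg_right _ (Real.rpow_pos_of_pos hkpos _).le
            calc (2 : ℝ) ^ (1 - ξ) ≤ 2 ^ (1 : ℝ) :=
                  Real.rpow_le_rpow_of_exponent_le one_le_two (by linarith)
              _ = 2 := Real.rpow_one 2
    have e4 : ((k : ℝ) + 1) ^ (1 - ξ) * (((k : ℝ) + 1) ^ ξ) = (k : ℝ) + 1 := by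
      rw [← Real.rpow_add hkpos]
      simp [Real.rpow_one]
    have e5 : (1 - ξ) * Real.log ((k : ℝ) + 2) ≤ 2 * ((k : ℝ) + 1) ^ (1 - ξ) := by
      rw [e1]; linarith
    calc (1 - ξ) * Real.log ((k : ℝ) + 2) * (((k : ℝ) + 1) ^ ξ)
        ≤ 2 * ((k : ℝ) + 1) ^ (1 - ξ) * (((k : ℝ) + 1) ^ ξ) :=
          mul_le_mul_of_nonneg_right e5 hP.le
      _ = 2 * ((k : ℝ) + 1) := by rw [mul_assoc, e4]
  -- final combination
  have hfinal : C * Real.log ((k : ℝ) + 2) * (L * (2 * C₂' / ((k : ℝ) + 1)))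
      ≤ Cξ * (c ^ ξ / ((k : ℝ) + 1) ^ ξ) := by
    have heq : Cξ * (c ^ ξ / ((k : ℝ) + 1) ^ ξ) = 4 * L * C * C₂' / ((1 - ξ) * (((k : ℝ) + 1) ^ ξ)) := by
      rw [hCξ_def]
      field_simp
    have heq2 : C * Real.log ((k : ℝ) + 2) * (L * (2 * C₂' / ((k : ℝ) + 1)))
        = 2 * L * C * C₂' * Real.log ((k : ℝ) + 2) / ((k : ℝ) + 1) := by ring
    have hcoef : (0 : ℝ) ≤ 2 * L * C * C₂' :=
      mul_nonneg (mul_nonneg (mul_nonneg (by norm_num) hL.le) hCpos.le) hC₂pos.le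
    have hmul := mul_le_mul_of_nonneg_left hlog_pow hcoef
    rw [heq, heq2, div_le_div_iff₀ hkpos (mul_pos h1ξ hP)]
    ring_nf at hmul ⊢
    linarith
  have hlogpos : 0 ≤ Real.log ((k : ℝ) + 2) := Real.log_nonneg (by linarith)
  calc ‖x i - x k‖ ≤ C * Real.log ((k : ℝ) + 2) * (L * (2 * C₂' / ((k : ℝ) + 1))) := hnorm2
    _ ≤ Cξ * (c ^ ξ / ((k : ℝ) + 1) ^ ξ) := hfinal
    _ ≤ Cξ * b k ^ ξ := mul_le_mul_of_nonneg_left hbξ hCξpos.le
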